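/- Let φ : ℂ → ℝ be twice continuously differentiable and let μ₀ : ℂ → ℂ be holomorphic (complex differentiable on all of ℂ). Define A₁, A₂ : ℂ → Matrix (Fin 3) (Fin 3) ℂ by A₁(z) = [[∂_zφ(z), 0, 1], [e^{−φ(z)}μ₀(z), 0, 0], [0, e^{φ(z)}, 0]] and A₂(z) = [[0, e^{−φ(z)}·conj(μ₀(z)), 0], [0, ∂_z̄φ(z), 1], [e^{φ(z)}, 0, 0]]. Then the zero-curvature equation ∂_zA₂(z) − ∂_z̄A₁(z) + A₁(z)·A₂(z) − A₂(z)·A₁(z) = 0 holds for all z ∈ ℂ if and only if φ satisfies Wang's equation ∂_z∂_z̄φ(z) = e^{φ(z)} − e^{−2φ(z)}·|μ₀(z)|² for all z ∈ ℂ (equivalently, (1/4)Δφ = e^{φ} − e^{−2φ}|μ₀|², with Δ the Euclidean Laplacian on ℂ ≅ ℝ²). -/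

import Mathlib

/-- Wirtinger derivative `∂_z f` of a map `f : ℂ → ℂ`, via the real Fréchet derivative. -/
noncomputable def wirtZ (f : ℂ → ℂ) (p : ℂ) : ℂ :=
  (1 / 2) * (fderiv ℝ f p 1 - Complex.I * fderiv ℝ f p Complex.I)

/-- Conjugate Wirtinger derivative `∂_z̄ f` of a map `f : ℂ → ℂ`. -/
noncomputable def wirtZbar (f : ℂ → ℂ) (p : ℂ) : ℂ :=
  (1 / 2) * (fderiv ℝ f p 1 + Complex.I * fderiv ℝ f p Complex.I)

/-- Entrywise Wirtinger derivative `∂_z A` of a matrix-valued map. -/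
noncomputable def wirtZMat (A : ℂ → Matrix (Fin 3) (Fin 3) ℂ) (p : ℂ) :
    Matrix (Fin 3) (Fin 3) ℂ :=
  Matrix.of fun i j => wirtZ (fun w => A w i j) p

/-- Entrywise conjugate Wirtinger derivative `∂_z̄ A` of a matrix-valued map. -/
noncomputable def wirtZbarMat (A : ℂ → Matrix (Fin 3) (Fin 3) ℂ) (p : ℂ) :
    Matrix (Fin 3) (Fin 3) ℂ :=
  Matrix.of fun i j => wirtZbar (fun w => A w i j) p

/-- The `dz`-part of the affine sphere connection form. -/
noncomputable def affA1 (φ : ℂ → ℝ) (μ₀ : ℂ → ℂ) (z : ℂ) : Matrix (Fin 3) (Fin 3) ℂ :=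
  !![wirtZ (fun w => (φ w : ℂ)) z, 0, 1;
     (Real.exp (-φ z) : ℂ) * μ₀ z, 0, 0;
     0, (Real.exp (φ z) : ℂ), 0]

/-- The `dz̄`-part of the affine sphere connection form. -/
noncomputable def affA2 (φ : ℂ → ℝ) (μ₀ : ℂ → ℂ) (z : ℂ) : Matrix (Fin 3) (Fin 3) ℂ :=
  !![0, (Real.exp (-φ z) : ℂ) * (starRingEnd ℂ) (μ₀ z), 0;
     0, wirtZbar (fun w => (φ w : ℂ)) z, 1;
     (Real.exp (φ z) : ℂ), 0, 0]


lemma wirtZ_const (c p : ℂ) : wirtZ (fun _ => c) p = 0 := by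
  simp [wirtZ, fderiv_const]
lemma wirtZbar_const (c p : ℂ) : wirtZbar (fun _ => c) p = 0 := by
  simp [wirtZbar, fderiv_const]

lemma wirtZ_mul {f g : ℂ → ℂ} {p : ℂ} (hf : DifferentiableAt ℝ f p)
    (hg : DifferentiableAt ℝ g p) :
    wirtZ (fun w => f w * g w) p = wirtZ f p * g p + f p * wirtZ g p := by
  simp only [wirtZ, fderiv_fun_mul hf hg, ContinuousLinearMap.add_apply,
    ContinuousLinearMap.smul_apply, smul_eq_mul]
  ring
lemma wirtZbar_mul {f g : ℂ → ℂ} {p : ℂ} (hf : DifferentiableAt ℝ f p)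
    (hg : DifferentiableAt ℝ g p) :
    wirtZbar (fun w => f w * g w) p = wirtZbar f p * g p + f p * wirtZbar g p := by
  simp only [wirtZbar, fderiv_fun_mul hf hg, ContinuousLinearMap.add_apply,
    ContinuousLinearMap.smul_apply, smul_eq_mul]
  ring

lemma wirtZ_neg (f : ℂ → ℂ) (p : ℂ) : wirtZ (fun w => -f w) p = - wirtZ f p := by
  simp only [wirtZ, fderiv_fun_neg, ContinuousLinearMap.neg_apply]
  ring
lemma wirtZbar_neg (f : ℂ → ℂ) (p : ℂ) : wirtZbar (fun w => -f w) p = - wirtZbar f p := by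
  simp only [wirtZbar, fderiv_fun_neg, ContinuousLinearMap.neg_apply]
  ring

lemma wirtZ_exp {g : ℂ → ℂ} {p : ℂ} (hg : DifferentiableAt ℝ g p) :
    wirtZ (fun w => Complex.exp (g w)) p = Complex.exp (g p) * wirtZ g p := by
  have h : HasFDerivAt (fun w => Complex.exp (g w))
      ((((1 : ℂ →L[ℂ] ℂ).smulRight (Complex.exp (g p))).restrictScalars ℝ).comp
        (fderiv ℝ g p)) p :=
    ((Complex.hasDerivAt_exp (g p)).hasFDerivAt.restrictScalars ℝ).comp p hg.hasFDerivAt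
  simp only [wirtZ, h.fderiv, ContinuousLinearMap.coe_comp', Function.comp_apply,
    ContinuousLinearMap.coe_restrictScalars', ContinuousLinearMap.smulRight_apply,
    ContinuousLinearMap.one_apply, smul_eq_mul]
  ring
lemma wirtZbar_exp {g : ℂ → ℂ} {p : ℂ} (hg : DifferentiableAt ℝ g p) :
    wirtZbar (fun w => Complex.exp (g w)) p = Complex.exp (g p) * wirtZbar g p := by
  have h : HasFDerivAt (fun w => Complex.exp (g w))
      ((((1 : ℂ →L[ℂ] ℂ).smulRight (Complex.exp (g p))).restrictScalars ℝ).comp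
        (fderiv ℝ g p)) p :=
    ((Complex.hasDerivAt_exp (g p)).hasFDerivAt.restrictScalars ℝ).comp p hg.hasFDerivAt
  simp only [wirtZbar, h.fderiv, ContinuousLinearMap.coe_comp', Function.comp_apply,
    ContinuousLinearMap.coe_restrictScalars', ContinuousLinearMap.smulRight_apply,
    ContinuousLinearMap.one_apply, smul_eq_mul]
  ring

lemma wirtZbar_holo {f : ℂ → ℂ} {p : ℂ} (hf : DifferentiableAt ℂ f p) :
    wirtZbar f p = 0 := by
  have h := (hf.hasFDerivAt.restrictScalars ℝ).fderiv
  have h2 : (fderiv ℂ f p) Complex.I = Complex.I * fderiv ℂ f p 1 := by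
    simpa [smul_eq_mul] using (fderiv ℂ f p).map_smul Complex.I 1
  rw [wirtZbar, h]
  simp only [ContinuousLinearMap.coe_restrictScalars', h2]
  rw [← mul_assoc, Complex.I_mul_I]
  ring

lemma wirtZ_conj {f : ℂ → ℂ} {p : ℂ} (hf : DifferentiableAt ℝ f p) :
    wirtZ (fun w => (starRingEnd ℂ) (f w)) p = (starRingEnd ℂ) (wirtZbar f p) := by
  have h0 : HasFDerivAt (fun w : ℂ => (starRingEnd ℂ) w)
      (Complex.conjCLE : ℂ →L[ℝ] ℂ) (f p) := Complex.conjCLE.hasFDerivAt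
  have h : HasFDerivAt (fun w => (starRingEnd ℂ) (f w))
      ((Complex.conjCLE : ℂ →L[ℝ] ℂ).comp (fderiv ℝ f p)) p :=
    h0.comp p hf.hasFDerivAt
  simp only [wirtZ, wirtZbar, h.fderiv, ContinuousLinearMap.coe_comp', Function.comp_apply,
    ContinuousLinearEquiv.coe_coe, Complex.conjCLE_apply, map_mul, map_add, map_sub,
    map_div₀, map_one, Complex.conj_I, map_ofNat]
  ring

theorem stmt5 (φ : ℂ → ℝ) (hφ : ContDiff ℝ 2 φ)
    (μ₀ : ℂ → ℂ) (hμ₀ : Differentiable ℂ μ₀) :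
    (∀ z : ℂ,
        wirtZMat (affA2 φ μ₀) z - wirtZbarMat (affA1 φ μ₀) z +
          affA1 φ μ₀ z * affA2 φ μ₀ z - affA2 φ μ₀ z * affA1 φ μ₀ z = 0) ↔
    (∀ z : ℂ,
        wirtZ (fun w => wirtZbar (fun p => (φ p : ℂ)) w) z =
          (Real.exp (φ z) : ℂ) -
            (Real.exp (-2 * φ z) : ℂ) * ((‖μ₀ z‖ : ℂ)) ^ 2) := by
  set φc : ℂ → ℂ := fun w => (φ w : ℂ) with hφcdef
  have hφd : Differentiable ℝ φ := hφ.differentiable (by norm_num)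
  have hφcd : Differentiable ℝ φc := Complex.ofRealCLM.differentiable.comp hφd
  have hfderivφc : ∀ w, fderiv ℝ φc w = Complex.ofRealCLM.comp (fderiv ℝ φ w) := by
    intro w
    exact (Complex.ofRealCLM.hasFDerivAt.comp w (hφd w).hasFDerivAt).fderiv
  have hf' : ContDiff ℝ 1 (fderiv ℝ φ) := hφ.fderiv_right (by norm_num)
  have happ : ∀ v : ℂ, Differentiable ℝ (fun w => fderiv ℝ φ w v) := by
    intro v
    exact (hf'.clm_apply contDiff_const).differentiable (by norm_num)
  have hω : (fun w => wirtZ φc w) =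
      fun w => (1/2 : ℂ) * (((fderiv ℝ φ w 1 : ℝ) : ℂ)
        - Complex.I * ((fderiv ℝ φ w Complex.I : ℝ) : ℂ)) := by
    funext w
    rw [wirtZ, hfderivφc w]
    simp [Complex.ofRealCLM_apply]
  have hωd : Differentiable ℝ (fun w => wirtZ φc w) := by
    rw [hω]
    exact ((Complex.ofRealCLM.differentiable.comp (happ 1)).sub
      ((Complex.ofRealCLM.differentiable.comp (happ Complex.I)).const_mul _)).const_mul _
  -- coercion rewrites for exponentials
  have hu : ∀ w, ((Real.exp (-φ w) : ℝ) : ℂ) = Complex.exp (-(φc w)) := by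
    intro w; rw [Complex.ofReal_exp, Complex.ofReal_neg]
  have hv : ∀ w, ((Real.exp (φ w) : ℝ) : ℂ) = Complex.exp (φc w) := fun w =>
    Complex.ofReal_exp _
  have hud : Differentiable ℝ (fun w => Complex.exp (-(φc w))) :=
    (Complex.differentiable_exp (𝕜 := ℝ)).comp hφcd.neg
  have hvd : Differentiable ℝ (fun w => Complex.exp (φc w)) :=
    (Complex.differentiable_exp (𝕜 := ℝ)).comp hφcd
  have hμd : Differentiable ℝ μ₀ := hμ₀.restrictScalars ℝ
  have hμcd : Differentiable ℝ (fun w => (starRingEnd ℂ) (μ₀ w)) := by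
    have := (Complex.conjCLE.differentiable.comp hμd)
    exact this
  -- conj of wirtZ φc is wirtZbar φc
  have hcc : (fun w => (starRingEnd ℂ) (wirtZ φc w)) = fun w => wirtZbar φc w := by
    funext w
    have h1 : (fun w' => (starRingEnd ℂ) (φc w')) = φc := funext fun w' =>
      Complex.conj_ofReal _
    have h2 := wirtZ_conj (hφcd w)
    rw [h1] at h2
    rw [h2, Complex.conj_conj]
  have e5 : ∀ z, wirtZbar (fun w => wirtZ φc w) z =
      (starRingEnd ℂ) (wirtZ (fun w => wirtZbar φc w) z) := by
    intro z
    have h2 := wirtZ_conj (f := fun w => wirtZ φc w) (hωd z)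
    rw [hcc] at h2
    rw [h2, Complex.conj_conj]
  -- entry computations
  have e1 : ∀ z, wirtZ (fun w => ((Real.exp (-φ w) : ℝ) : ℂ) * (starRingEnd ℂ) (μ₀ w)) z
      = -(wirtZ φc z) * ((Real.exp (-φ z) : ℝ) : ℂ) * (starRingEnd ℂ) (μ₀ z) := by
    intro z
    have hfun : (fun w => ((Real.exp (-φ w) : ℝ) : ℂ) * (starRingEnd ℂ) (μ₀ w))
        = fun w => Complex.exp (-(φc w)) * (starRingEnd ℂ) (μ₀ w) :=
      funext fun w => by rw [hu w]
    rw [hfun, wirtZ_mul (hud z) (hμcd z), wirtZ_exp (g := fun w => -φc w) (hφcd z).neg, wirtZ_neg,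
      wirtZ_conj (hμd z), wirtZbar_holo (hμ₀ z), hu z]
    simp only [map_zero, mul_zero, add_zero]
    ring
  have e2 : ∀ z, wirtZ (fun w => ((Real.exp (φ w) : ℝ) : ℂ)) z
      = ((Real.exp (φ z) : ℝ) : ℂ) * wirtZ φc z := by
    intro z
    have hfun : (fun w => ((Real.exp (φ w) : ℝ) : ℂ)) = fun w => Complex.exp (φc w) :=
      funext fun w => hv w
    rw [hfun, wirtZ_exp (hφcd z), hv z]
  have e3 : ∀ z, wirtZbar (fun w => ((Real.exp (-φ w) : ℝ) : ℂ) * μ₀ w) z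
      = -(wirtZbar φc z) * ((Real.exp (-φ z) : ℝ) : ℂ) * μ₀ z := by
    intro z
    have hfun : (fun w => ((Real.exp (-φ w) : ℝ) : ℂ) * μ₀ w)
        = fun w => Complex.exp (-(φc w)) * μ₀ w := funext fun w => by rw [hu w]
    rw [hfun, wirtZbar_mul (hud z) (hμd z), wirtZbar_exp (g := fun w => -φc w) (hφcd z).neg, wirtZbar_neg,
      wirtZbar_holo (hμ₀ z), hu z]
    ring
  have e4 : ∀ z, wirtZbar (fun w => ((Real.exp (φ w) : ℝ) : ℂ)) z
      = ((Real.exp (φ z) : ℝ) : ℂ) * wirtZbar φc z := by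
    intro z
    have hfun : (fun w => ((Real.exp (φ w) : ℝ) : ℂ)) = fun w => Complex.exp (φc w) :=
      funext fun w => hv w
    rw [hfun, wirtZbar_exp (hφcd z), hv z]
  have habs : ∀ z, ((Real.exp (-φ z) : ℝ) : ℂ) * μ₀ z
        * (((Real.exp (-φ z) : ℝ) : ℂ) * (starRingEnd ℂ) (μ₀ z))
      = ((Real.exp (-2 * φ z) : ℝ) : ℂ) * ((‖μ₀ z‖ : ℂ)) ^ 2 := by
    intro z
    have h1 : Real.exp (-φ z) * Real.exp (-φ z) = Real.exp (-2 * φ z) := by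
      rw [← Real.exp_add]; ring_nf
    calc ((Real.exp (-φ z) : ℝ) : ℂ) * μ₀ z
          * (((Real.exp (-φ z) : ℝ) : ℂ) * (starRingEnd ℂ) (μ₀ z))
        = (((Real.exp (-φ z) * Real.exp (-φ z) : ℝ)) : ℂ)
            * (μ₀ z * (starRingEnd ℂ) (μ₀ z)) := by push_cast; ring
      _ = ((Real.exp (-2 * φ z) : ℝ) : ℂ) * ((‖μ₀ z‖ : ℂ)) ^ 2 := by
          rw [h1, Complex.mul_conj, ← Complex.sq_norm]
          push_cast
          ring
  have key : ∀ z, wirtZMat (affA2 φ μ₀) z - wirtZbarMat (affA1 φ μ₀) z +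
      affA1 φ μ₀ z * affA2 φ μ₀ z - affA2 φ μ₀ z * affA1 φ μ₀ z =
      !![-(starRingEnd ℂ) (wirtZ (fun w => wirtZbar φc w) z -
            ((Real.exp (φ z) : ℂ) -
              (Real.exp (-2 * φ z) : ℂ) * ((‖μ₀ z‖ : ℂ)) ^ 2)), 0, 0;
         0, wirtZ (fun w => wirtZbar φc w) z -
            ((Real.exp (φ z) : ℂ) -
              (Real.exp (-2 * φ z) : ℂ) * ((‖μ₀ z‖ : ℂ)) ^ 2), 0;
         0, 0, 0] := by
    intro z
    ext i j
    fin_cases i <;> fin_cases j <;>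
      simp only [wirtZMat, wirtZbarMat, affA1, affA2, Matrix.of_apply, Matrix.sub_apply,
        Matrix.add_apply, Matrix.mul_apply, Fin.sum_univ_three, Fin.isValue, Fin.reduceFinMk,
        Matrix.cons_val', Matrix.cons_val_zero, Matrix.cons_val_one, Matrix.head_cons,
        Matrix.cons_val_two, Matrix.tail_cons, Matrix.head_fin_const, Matrix.empty_val',
        Matrix.cons_val_fin_one]
    · -- (0,0)
      rw [wirtZ_const, e5 z]
      simp only [map_sub, map_mul, map_pow, Complex.conj_ofReal]
      simp only [← hφcdef]
      linear_combination -habs z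
    · -- (0,1)
      rw [e1 z, wirtZbar_const]
      simp only [← hφcdef]
      ring
    · rw [wirtZ_const, wirtZbar_const]; ring
    · -- (1,0)
      rw [wirtZ_const, e3 z]
      simp only [← hφcdef]
      ring
    · -- (1,1)
      rw [wirtZbar_const, habs z]
      simp only [← hφcdef]
      ring
    · rw [wirtZ_const, wirtZbar_const]; ring
    · -- (2,0)
      rw [e2 z, wirtZbar_const]
      simp only [← hφcdef]
      ring
    · -- (2,1)
      rw [wirtZ_const, e4 z]
      simp only [← hφcdef]
      ring
    · rw [wirtZ_const, wirtZbar_const]; ring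
  constructor
  · intro h z
    have hM := (key z).symm.trans (h z)
    have h11 := Matrix.ext_iff.mpr hM 1 1
    simp only [Matrix.cons_val_one, Matrix.head_cons, Matrix.zero_apply, Fin.isValue,
      Matrix.cons_val_zero, Matrix.head_fin_const] at h11
    exact sub_eq_zero.mp h11
  · intro h z
    rw [key z, sub_eq_zero.mpr (h z)]
    simp only [map_zero, neg_zero]
    ext i j
    fin_cases i <;> fin_cases j <;> rfl
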